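/- Let N ≥ 2 and let Ω ⊂ ℝ^N be a nonempty bounded open convex set. Then for every t ∈ [0, ∞), the set Ω^t is Lebesgue measurable and Vol(Ω^t) = Vol(Ω), where Vol denotes Lebesgue measure on ℝ^N. -/

import Mathlib

open MeasureTheory Set Topology

/-- The lower endpoint `y₁(x') = inf { y : (x', y) ∈ Ω }` of the vertical section of `Ω`. -/
noncomputable def ySecInf {E : Type*} (Ω : Set (E × ℝ)) (x' : E) : ℝ :=
  sInf {y : ℝ | (x', y) ∈ Ω}

/-- The upper endpoint `y₂(x') = sup { y : (x', y) ∈ Ω }` of the vertical section of `Ω`. -/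
noncomputable def ySecSup {E : Type*} (Ω : Set (E × ℝ)) (x' : E) : ℝ :=
  sSup {y : ℝ | (x', y) ∈ Ω}

/-- The continuous Steiner symmetrization `Ω^t` of `Ω` with respect to the hyperplane
`{x_N = 0}`: `Ω^t = {(x', y) : x' ∈ Ω', y₁^t(x') < y < y₂^t(x')}` where
`y₁^t = (y₁ - y₂ + e^{-t}(y₁ + y₂))/2` and `y₂^t = (y₂ - y₁ + e^{-t}(y₁ + y₂))/2`. -/
noncomputable def steinerSym {E : Type*} (Ω : Set (E × ℝ)) (t : ℝ) : Set (E × ℝ) :=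
  {q : E × ℝ | q.1 ∈ Prod.fst '' Ω ∧
    (ySecInf Ω q.1 - ySecSup Ω q.1 + Real.exp (-t) * (ySecInf Ω q.1 + ySecSup Ω q.1)) / 2
      < q.2 ∧
    q.2 <
    (ySecSup Ω q.1 - ySecInf Ω q.1 + Real.exp (-t) * (ySecInf Ω q.1 + ySecSup Ω q.1)) / 2}

/-- An open bounded nonempty convex subset of ℝ is the open interval (sInf, sSup). -/
lemma open_convex_real_eq_Ioo (S : Set ℝ) (hop : IsOpen S) (hconv : Convex ℝ S)
    (hbd : Bornology.IsBounded S) (hne : S.Nonempty) :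
    S = Ioo (sInf S) (sSup S) ∧ sInf S < sSup S := by
  have hba : BddAbove S := hbd.bddAbove
  have hbb : BddBelow S := hbd.bddBelow
  have hsup : sSup S ∉ S := by
    intro h
    obtain ⟨ε, hε, hball⟩ := Metric.isOpen_iff.1 hop _ h
    have : sSup S + ε / 2 ∈ S := hball (by
      rw [Metric.mem_ball, Real.dist_eq]
      have h2 : sSup S + ε / 2 - sSup S = ε / 2 := by ring
      rw [h2, abs_of_pos (by linarith)]; linarith)
    have := le_csSup hba this
    linarith
  have hinf : sInf S ∉ S := by
    intro h
    obtain ⟨ε, hε, hball⟩ := Metric.isOpen_iff.1 hop _ h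
    have : sInf S - ε / 2 ∈ S := hball (by
      rw [Metric.mem_ball, Real.dist_eq]
      have h2 : sInf S - ε / 2 - sInf S = -(ε / 2) := by ring
      rw [h2, abs_neg, abs_of_pos (by linarith)]; linarith)
    have := csInf_le hbb this
    linarith
  have hsub : S ⊆ Ioo (sInf S) (sSup S) := by
    intro y hy
    refine ⟨lt_of_le_of_ne (csInf_le hbb hy) ?_, lt_of_le_of_ne (le_csSup hba hy) ?_⟩
    · intro h; exact hinf (h ▸ hy)
    · intro h; exact hsup (h ▸ hy)
  constructor
  · refine Subset.antisymm hsub fun y hy => ?_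
    obtain ⟨a, ha, hay⟩ := exists_lt_of_csInf_lt hne hy.1
    obtain ⟨b, hb, hyb⟩ := exists_lt_of_lt_csSup hne hy.2
    exact hconv.ordConnected.out ha hb ⟨hay.le, hyb.le⟩
  · obtain ⟨y, hy⟩ := hne
    exact (hsub hy).1.trans (hsub hy).2

section Aux
variable {E : Type*} [NormedAddCommGroup E] [NormedSpace ℝ E]

omit [NormedSpace ℝ E] in
lemma sec_bddAbove {Ω : Set (E × ℝ)} (hbd : Bornology.IsBounded Ω) (x' : E) :
    BddAbove {y : ℝ | (x', y) ∈ Ω} := by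
  obtain ⟨R, hR⟩ := isBounded_iff_forall_norm_le.1 hbd
  exact ⟨R, fun y hy => (le_abs_self y).trans ((norm_snd_le ((x', y) : E × ℝ)).trans (hR _ hy))⟩

omit [NormedSpace ℝ E] in
lemma sec_bddBelow {Ω : Set (E × ℝ)} (hbd : Bornology.IsBounded Ω) (x' : E) :
    BddBelow {y : ℝ | (x', y) ∈ Ω} := by
  obtain ⟨R, hR⟩ := isBounded_iff_forall_norm_le.1 hbd
  exact ⟨-R, fun y hy => neg_le_of_neg_le
    ((neg_le_abs y).trans ((norm_snd_le ((x', y) : E × ℝ)).trans (hR _ hy)) : -y ≤ R)⟩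

omit [NormedAddCommGroup E] [NormedSpace ℝ E] in
lemma sec_nonempty {Ω : Set (E × ℝ)} {x' : E} (hx : x' ∈ Prod.fst '' Ω) :
    {y : ℝ | (x', y) ∈ Ω}.Nonempty := by
  obtain ⟨⟨a, b⟩, hab, rfl⟩ := hx
  exact ⟨b, hab⟩

lemma proj_convex {Ω : Set (E × ℝ)} (hconv : Convex ℝ Ω) : Convex ℝ (Prod.fst '' Ω) := by
  rintro x ⟨p, hp, rfl⟩ y ⟨q, hq, rfl⟩ a b ha hb hab
  exact ⟨a • p + b • q, hconv hp hq ha hb hab, rfl⟩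

lemma combo_mem {Ω : Set (E × ℝ)} (hconv : Convex ℝ Ω) {x y : E} {u v a b : ℝ}
    (hu : (x, u) ∈ Ω) (hv : (y, v) ∈ Ω) (ha : 0 ≤ a) (hb : 0 ≤ b) (hab : a + b = 1) :
    (a • x + b • y, a * u + b * v) ∈ Ω := by
  have := hconv hu hv ha hb hab
  simpa [Prod.smul_mk, Prod.mk_add_mk, smul_eq_mul] using this

lemma ySecSup_concave {Ω : Set (E × ℝ)} (hbd : Bornology.IsBounded Ω) (hconv : Convex ℝ Ω) :
    ConcaveOn ℝ (Prod.fst '' Ω) (ySecSup Ω) := by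
  refine ⟨proj_convex hconv, fun x hx y hy a b ha hb hab => ?_⟩
  simp only [smul_eq_mul, ySecSup]
  refine le_of_forall_sub_le fun ε hε => ?_
  obtain ⟨u, hu, hu'⟩ := exists_lt_of_lt_csSup (sec_nonempty hx)
    (sub_lt_self (sSup {y : ℝ | (x, y) ∈ Ω}) hε)
  obtain ⟨v, hv, hv'⟩ := exists_lt_of_lt_csSup (sec_nonempty hy)
    (sub_lt_self (sSup {y' : ℝ | (y, y') ∈ Ω}) hε)
  have hmem : (a • x + b • y, a * u + b * v) ∈ Ω := combo_mem hconv hu hv ha hb hab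
  have h1 : a * u + b * v ≤ sSup {y' : ℝ | (a • x + b • y, y') ∈ Ω} :=
    le_csSup (sec_bddAbove hbd _) hmem
  have h2 : a * (sSup {y : ℝ | (x, y) ∈ Ω} - ε) ≤ a * u := by nlinarith
  have h3 : b * (sSup {y' : ℝ | (y, y') ∈ Ω} - ε) ≤ b * v := by nlinarith
  nlinarith

lemma ySecInf_convex {Ω : Set (E × ℝ)} (hbd : Bornology.IsBounded Ω) (hconv : Convex ℝ Ω) :
    ConvexOn ℝ (Prod.fst '' Ω) (ySecInf Ω) := by
  refine ⟨proj_convex hconv, fun x hx y hy a b ha hb hab => ?_⟩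
  simp only [smul_eq_mul, ySecInf]
  refine le_of_forall_sub_le fun ε hε => ?_
  obtain ⟨u, hu, hu'⟩ := exists_lt_of_csInf_lt (sec_nonempty hx)
    (lt_add_of_pos_right (sInf {y : ℝ | (x, y) ∈ Ω}) hε)
  obtain ⟨v, hv, hv'⟩ := exists_lt_of_csInf_lt (sec_nonempty hy)
    (lt_add_of_pos_right (sInf {y' : ℝ | (y, y') ∈ Ω}) hε)
  have hmem : (a • x + b • y, a * u + b * v) ∈ Ω := combo_mem hconv hu hv ha hb hab
  have h1 : sInf {y' : ℝ | (a • x + b • y, y') ∈ Ω} ≤ a * u + b * v :=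
    csInf_le (sec_bddBelow hbd _) hmem
  have h2 : a * u ≤ a * (sInf {y : ℝ | (x, y) ∈ Ω} + ε) := by nlinarith
  have h3 : b * v ≤ b * (sInf {y' : ℝ | (y, y') ∈ Ω} + ε) := by nlinarith
  nlinarith

/-- The vertical section of an open bounded convex set, at a point of the projection,
is the open interval `(ySecInf, ySecSup)`. -/
lemma sec_eq_Ioo {Ω : Set (E × ℝ)} (hop : IsOpen Ω) (hconv : Convex ℝ Ω)
    (hbd : Bornology.IsBounded Ω) {x' : E} (hx : x' ∈ Prod.fst '' Ω) :
    {y : ℝ | (x', y) ∈ Ω} = Ioo (ySecInf Ω x') (ySecSup Ω x') ∧ ySecInf Ω x' < ySecSup Ω x' := by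
  have hopS : IsOpen {y : ℝ | (x', y) ∈ Ω} := hop.preimage (Continuous.prodMk_right x')
  have hconvS : Convex ℝ {y : ℝ | (x', y) ∈ Ω} := by
    intro u hu v hv a b ha hb hab
    have := combo_mem hconv hu hv ha hb hab
    rwa [Convex.combo_self hab x'] at this
  have hbdS : Bornology.IsBounded {y : ℝ | (x', y) ∈ Ω} :=
    isBounded_iff_bddBelow_bddAbove.2 ⟨sec_bddBelow hbd x', sec_bddAbove hbd x'⟩
  exact open_convex_real_eq_Ioo _ hopS hconvS hbdS (sec_nonempty hx)

end Aux

/-- **The continuous Steiner symmetrization of a convex set preserves volume.**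
For a nonempty bounded open convex `Ω ⊂ ℝ^{N-1} × ℝ` and every `t ≥ 0`, the set `Ω^t` is
Lebesgue measurable and has the same Lebesgue measure as `Ω`. -/
theorem steiner_volume_preserving
    (N : ℕ) (hN : 2 ≤ N)
    (Ω : Set (EuclideanSpace ℝ (Fin (N - 1)) × ℝ))
    (hne : Ω.Nonempty) (hbd : Bornology.IsBounded Ω) (hop : IsOpen Ω)
    (hconv : Convex ℝ Ω) (t : ℝ) (ht : 0 ≤ t) :
    MeasurableSet (steinerSym Ω t) ∧ volume (steinerSym Ω t) = volume Ω := by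
  set U := Prod.fst '' Ω with hUdef
  have hUopen : IsOpen U := isOpenMap_fst Ω hop
  set c := Real.exp (-t) with hcdef
  set f := ySecInf Ω with hfdef
  set g := ySecSup Ω with hgdef
  set F := fun x => (f x - g x + c * (f x + g x)) / 2 with hFdef
  set G := fun x => (g x - f x + c * (f x + g x)) / 2 with hGdef
  have hfc : ContinuousOn f U := (ySecInf_convex hbd hconv).continuousOn hUopen
  have hgc : ContinuousOn g U := (ySecSup_concave hbd hconv).continuousOn hUopen
  have hFc : ContinuousOn F U := (((hfc.sub hgc).add (continuousOn_const.mul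
    (hfc.add hgc))).div_const 2)
  have hGc : ContinuousOn G U := (((hgc.sub hfc).add (continuousOn_const.mul
    (hfc.add hgc))).div_const 2)
  have hSopen : IsOpen (steinerSym Ω t) := by
    rw [isOpen_iff_mem_nhds]
    rintro ⟨x, y⟩ ⟨hxU, h1, h2⟩
    have hFx : ContinuousAt F x := hFc.continuousAt (hUopen.mem_nhds hxU)
    have hGx : ContinuousAt G x := hGc.continuousAt (hUopen.mem_nhds hxU)
    have e1 : ∀ᶠ p : EuclideanSpace ℝ (Fin (N - 1)) × ℝ in 𝓝 (x, y), p.1 ∈ U :=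
      (hUopen.preimage continuous_fst).mem_nhds hxU
    have e2 : ∀ᶠ p : EuclideanSpace ℝ (Fin (N - 1)) × ℝ in 𝓝 (x, y), F p.1 < p.2 :=
      (show ContinuousAt (fun p : EuclideanSpace ℝ (Fin (N - 1)) × ℝ => F p.1) (x, y) from
        hFx.comp_of_eq continuousAt_fst rfl).eventually_lt continuousAt_snd h1
    have e3 : ∀ᶠ p : EuclideanSpace ℝ (Fin (N - 1)) × ℝ in 𝓝 (x, y), p.2 < G p.1 :=
      continuousAt_snd.eventually_lt (show ContinuousAt (fun p : EuclideanSpace ℝ (Fin (N - 1)) × ℝ =>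
        G p.1) (x, y) from hGx.comp_of_eq continuousAt_fst rfl) h2
    filter_upwards [e1, e2, e3] with p hp1 hp2 hp3
    exact ⟨hp1, hp2, hp3⟩
  refine ⟨hSopen.measurableSet, ?_⟩
  rw [Measure.volume_eq_prod, Measure.prod_apply hSopen.measurableSet,
    Measure.prod_apply hop.measurableSet]
  refine lintegral_congr fun x' => ?_
  by_cases hx : x' ∈ U
  · obtain ⟨hsec, hlt⟩ := sec_eq_Ioo hop hconv hbd hx
    have hΩ : Prod.mk x' ⁻¹' Ω = Ioo (f x') (g x') := hsec
    have hS : Prod.mk x' ⁻¹' steinerSym Ω t = Ioo (F x') (G x') := by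
      ext y
      constructor
      · rintro ⟨-, h1, h2⟩; exact ⟨h1, h2⟩
      · rintro ⟨h1, h2⟩; exact ⟨hx, h1, h2⟩
    rw [hΩ, hS, Real.volume_Ioo, Real.volume_Ioo]
    congr 1
    rw [hFdef, hGdef]; ring
  · have hΩ : Prod.mk x' ⁻¹' Ω = ∅ := by
      ext y
      simp only [mem_preimage, mem_empty_iff_false, iff_false]
      exact fun h => hx ⟨(x', y), h, rfl⟩
    have hS : Prod.mk x' ⁻¹' steinerSym Ω t = ∅ := by
      ext y
      simp only [mem_empty_iff_false, iff_false]
      rintro ⟨h1, -⟩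
      exact hx h1
    rw [hΩ, hS]
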